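/- Let x and y be left I-states of size k that are not too far, with generating intervals G_1, …, G_{n−k} ⊆ {1,…,n} of sizes l_1, …, l_{n−k}. For each m ≥ 0 let N_m be the number of tuples a = (a_1,…,a_n) of nonnegative integers with a_1 + ⋯ + a_n = m such that for every 1 ≤ i ≤ n−k there exists j ∈ G_i with a_j = 0 (i.e. the monomial U_1^{a_1}⋯U_n^{a_n} is not divisible by p_{G_i} = Π_{j ∈ G_i} U_j). Then in the formal power series ring ℤ[[t]]: Σ_{m≥0} N_m t^m = Π_{i=1}^{n−k} (1 + t + ⋯ + t^{l_i−1}) · (1−t)^{−k}. (Equivalently, the graded dimension of the summand I_x·B_l(n,k)·I_y of Ozsváth–Szabó's algebra is q^d Π_i (l_i)_{q²} / (1−q²)^k with t = q².) -/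

import Mathlib

/-- The `i`-th smallest element (0-indexed) of a finite set of natural numbers. -/
def nthElt (s : Finset ℕ) (i : ℕ) : ℕ := (s.sort (· ≤ ·)).getD i 0

/-- The hole set of an I-state: the complement `{0, …, n} \ s`. -/
def holes (n : ℕ) (s : Finset ℕ) : Finset ℕ := Finset.range (n + 1) \ s

/-- The `i`-th hole (0-indexed): `hnth n s i` is `h_{i+1}^s` in 1-indexed notation. -/
def hnth (n : ℕ) (s : Finset ℕ) (i : ℕ) : ℕ := nthElt (holes n s) i

/-- Two I-states of size `k` are too far if `|x_i − y_i| > 1` for some `i`. -/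
def TooFar (k : ℕ) (x y : Finset ℕ) : Prop :=
  ∃ i < k, 1 < ((nthElt x i : ℤ) - (nthElt y i : ℤ)).natAbs

/-- `N_m`: the number of exponent tuples `a = (a_1, …, a_n)` with `Σ a_j = m` such that for
each generating interval `G_i` (whose 0-indexed variable positions run from
`max(h_i^x, h_i^y)` to `min(h_{i+1}^x, h_{i+1}^y) − 1`) some `a_j` with `j ∈ G_i` vanishes,
i.e. the monomial `U^a` is not divisible by `p_{G_i}`. -/
def Ncount (n k : ℕ) (x y : Finset ℕ) (m : ℕ) : ℕ :=
  ((Finset.Nat.antidiagonalTuple n m).filter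
    (fun a : Fin n → ℕ => ∀ i < n - k, ∃ t : Fin n,
      max (hnth n x i) (hnth n y i) ≤ (t : ℕ) ∧
      (t : ℕ) < min (hnth n x (i + 1)) (hnth n y (i + 1)) ∧ a t = 0)).card

set_option linter.unusedSectionVars false
open Finset PowerSeries



lemma prod_neg' (S : Finset ℕ) (f : ℕ → ℤ) :
    ∏ i ∈ S, (-f i) = (-1 : ℤ) ^ S.card * ∏ i ∈ S, f i := by
  rw [← Finset.prod_const, ← Finset.prod_mul_distrib]
  simp

lemma nthElt_mem {s : Finset ℕ} {i : ℕ} (h : i < s.card) : nthElt s i ∈ s := by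
  have hl : i < (s.sort (· ≤ ·)).length := by rwa [Finset.length_sort]
  rw [nthElt, List.getD_eq_getElem?_getD, List.getElem?_eq_getElem hl]
  exact (Finset.mem_sort _).1 (List.getElem_mem hl)

lemma nthElt_lt {s : Finset ℕ} {i j : ℕ} (hij : i < j) (hj : j < s.card) :
    nthElt s i < nthElt s j := by
  have hl : j < (s.sort (· ≤ ·)).length := by rwa [Finset.length_sort]
  have hi' : i < (s.sort (· ≤ ·)).length := lt_trans hij hl
  rw [nthElt, nthElt, List.getD_eq_getElem?_getD, List.getD_eq_getElem?_getD,
    List.getElem?_eq_getElem hl, List.getElem?_eq_getElem hi']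
  exact (Finset.sortedLT_sort s).getElem_lt_getElem_iff.2 hij

section Holes

variable {n k : ℕ} {s : Finset ℕ}

lemma holes_card (hs : s ⊆ Finset.range n) (hsk : s.card = k) :
    (holes n s).card = n + 1 - k := by
  rw [holes, Finset.card_sdiff_of_subset (hs.trans (Finset.range_subset_range.2 (Nat.le_succ n))),
    Finset.card_range, hsk]

lemma hnth_le_n (hs : s ⊆ Finset.range n) (hsk : s.card = k) {i : ℕ} (hi : i < n + 1 - k) :
    hnth n s i ≤ n := by
  have : hnth n s i ∈ holes n s := nthElt_mem (by rwa [holes_card hs hsk])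
  have := Finset.mem_sdiff.1 this
  exact Nat.lt_succ_iff.1 (Finset.mem_range.1 this.1)

lemma hnth_mono (hs : s ⊆ Finset.range n) (hsk : s.card = k) {i j : ℕ} (hij : i ≤ j)
    (hj : j < n + 1 - k) : hnth n s i ≤ hnth n s j := by
  rcases eq_or_lt_of_le hij with rfl | h
  · exact le_rfl
  · exact le_of_lt (nthElt_lt h (by rwa [holes_card hs hsk]))

end Holes

section Main

variable (n k : ℕ) (x y : Finset ℕ)

def loIdx (i : ℕ) : ℕ := max (hnth n x i) (hnth n y i)
def hiIdx (i : ℕ) : ℕ := min (hnth n x (i + 1)) (hnth n y (i + 1))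
def Gset (i : ℕ) : Finset (Fin n) :=
  Finset.univ.filter fun t => loIdx n x y i ≤ (t : ℕ) ∧ (t : ℕ) < hiIdx n x y i

variable {n k x y}
variable (hkn : k ≤ n) (hx : x ⊆ Finset.range n) (hy : y ⊆ Finset.range n)
  (hxk : x.card = k) (hyk : y.card = k)

include hkn hx hy hxk hyk

lemma hiIdx_le_n {i : ℕ} (hi : i < n - k) : hiIdx n x y i ≤ n :=
  le_trans (min_le_left _ _) (hnth_le_n hx hxk (by omega))

lemma hiIdx_le_loIdx {i j : ℕ} (hij : i < j) (hj : j < n - k) :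
    hiIdx n x y i ≤ loIdx n x y j :=
  le_trans (min_le_left _ _)
    (le_trans (hnth_mono hx hxk hij (by omega)) (le_max_left _ _))

lemma card_Gset {i : ℕ} (hi : i < n - k) :
    (Gset n x y i).card = hiIdx n x y i - loIdx n x y i := by
  rw [← Nat.card_Ico (loIdx n x y i) (hiIdx n x y i)]
  apply Finset.card_bij (fun (t : Fin n) _ => (t : ℕ))
  · intro t ht
    simp only [Gset, Finset.mem_filter] at ht
    exact Finset.mem_Ico.2 ⟨ht.2.1, ht.2.2⟩
  · intro t _ t' _ h
    exact Fin.val_injective h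
  · intro m hm
    have hm' := Finset.mem_Ico.1 hm
    have hmn : m < n := lt_of_lt_of_le hm'.2 (hiIdx_le_n hkn hx hy hxk hyk hi)
    exact ⟨⟨m, hmn⟩, by simp [Gset, hm'.1, hm'.2], rfl⟩

lemma disjoint_Gset {i j : ℕ} (hij : i < j) (hj : j < n - k) :
    Disjoint (Gset n x y i) (Gset n x y j) := by
  rw [Finset.disjoint_left]
  intro t ht ht'
  simp only [Gset, Finset.mem_filter] at ht ht'
  have h1 := ht.2.2
  have h2 := ht'.2.1
  have h3 := hiIdx_le_loIdx hkn hx hy hxk hyk hij hj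
  omega

lemma stepB (S : Finset ℕ) (hS : S ⊆ Finset.range (n - k)) (m : ℕ) :
    ((Finset.Nat.antidiagonalTuple n m).filter
      (fun a : Fin n → ℕ => ∀ i ∈ S, ∀ t : Fin n,
        loIdx n x y i ≤ (t : ℕ) → (t : ℕ) < hiIdx n x y i → a t ≠ 0)).card
    = if (∑ i ∈ S, (hiIdx n x y i - loIdx n x y i)) ≤ m
      then (Finset.Nat.antidiagonalTuple n
        (m - ∑ i ∈ S, (hiIdx n x y i - loIdx n x y i))).card
      else 0 := by
  set L := ∑ i ∈ S, (hiIdx n x y i - loIdx n x y i) with hLdef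
  set T : Finset (Fin n) := S.biUnion (fun i => Gset n x y i) with hTdef
  have hTmem : ∀ t : Fin n,
      t ∈ T ↔ ∃ i ∈ S, loIdx n x y i ≤ (t : ℕ) ∧ (t : ℕ) < hiIdx n x y i := by
    intro t; simp [hTdef, Gset]
  have hTcard : T.card = L := by
    rw [hTdef, Finset.card_biUnion]
    · exact Finset.sum_congr rfl fun i hi =>
        card_Gset hkn hx hy hxk hyk (Finset.mem_range.1 (hS hi))
    · intro i hi j hj hij
      rcases lt_or_gt_of_ne hij with h | h
      · exact disjoint_Gset hkn hx hy hxk hyk h (Finset.mem_range.1 (hS hj))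
      · exact (disjoint_Gset hkn hx hy hxk hyk h (Finset.mem_range.1 (hS hi))).symm
  have hindsum : (∑ t : Fin n, if t ∈ T then 1 else 0) = L := by
    rw [Finset.sum_ite_mem, Finset.univ_inter, Finset.sum_const, smul_eq_mul, mul_one, hTcard]
  have hQ : ∀ a : Fin n → ℕ,
      (∀ i ∈ S, ∀ t : Fin n, loIdx n x y i ≤ (t : ℕ) → (t : ℕ) < hiIdx n x y i → a t ≠ 0)
        ↔ ∀ t ∈ T, 1 ≤ a t := by
    intro a
    constructor
    · intro h t ht
      obtain ⟨i, hiS, h1, h2⟩ := (hTmem t).1 ht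
      exact Nat.one_le_iff_ne_zero.2 (h i hiS t h1 h2)
    · intro h i hiS t h1 h2
      exact Nat.one_le_iff_ne_zero.1 (h t ((hTmem t).2 ⟨i, hiS, h1, h2⟩))
  have hLsum : ∀ a : Fin n → ℕ, (∀ t ∈ T, 1 ≤ a t) → L ≤ ∑ t, a t := by
    intro a ha
    calc L = ∑ t ∈ T, 1 := by simp [hTcard.symm]
    _ ≤ ∑ t ∈ T, a t := Finset.sum_le_sum ha
    _ ≤ ∑ t, a t := Finset.sum_le_sum_of_subset (Finset.subset_univ T)
  split_ifs with hLm
  · refine Finset.card_bij' (fun a _ => fun t => a t - if t ∈ T then 1 else 0)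
      (fun b _ => fun t => b t + if t ∈ T then 1 else 0) ?_ ?_ ?_ ?_
    · intro a ha
      have haT := (hQ a).1 (Finset.mem_filter.1 ha).2
      have hsum := Finset.Nat.mem_antidiagonalTuple.1 (Finset.mem_filter.1 ha).1
      rw [Finset.Nat.mem_antidiagonalTuple, Finset.sum_tsub_distrib, hsum, hindsum]
      intro t _
      by_cases ht : t ∈ T
      · simpa [ht] using haT t ht
      · simp [ht]
    · intro b hb
      have hsum := Finset.Nat.mem_antidiagonalTuple.1 hb
      rw [Finset.mem_filter]
      constructor
      · rw [Finset.Nat.mem_antidiagonalTuple, Finset.sum_add_distrib, hsum, hindsum]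
        omega
      · rw [hQ]
        intro t ht
        simp [ht]
    · intro a ha
      have haT := (hQ a).1 (Finset.mem_filter.1 ha).2
      funext t
      by_cases ht : t ∈ T
      · simp only [ht, if_pos]
        exact Nat.sub_add_cancel (haT t ht)
      · simp [ht]
    · intro b _
      funext t
      simp
  · rw [Finset.card_eq_zero, Finset.filter_eq_empty_iff]
    intro a ha
    rw [hQ]
    intro h
    have h1 := hLsum a h
    rw [Finset.Nat.mem_antidiagonalTuple.1 ha] at h1
    omega

lemma stepA (m : ℕ) :
    (Ncount n k x y m : ℤ) =
      ∑ S ∈ (Finset.range (n - k)).powerset, (-1 : ℤ) ^ S.card *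
        (((Finset.Nat.antidiagonalTuple n m).filter fun a : Fin n → ℕ => ∀ i ∈ S, ∀ t : Fin n,
          loIdx n x y i ≤ (t : ℕ) → (t : ℕ) < hiIdx n x y i → a t ≠ 0).card : ℤ) := by
  classical
  have key : ∀ a : Fin n → ℕ,
      (if (∀ i < n - k, ∃ t : Fin n,
          loIdx n x y i ≤ (t : ℕ) ∧ (t : ℕ) < hiIdx n x y i ∧ a t = 0) then (1 : ℤ) else 0)
      = ∑ S ∈ (Finset.range (n - k)).powerset, (-1 : ℤ) ^ S.card *
          (if (∀ i ∈ S, ∀ t : Fin n,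
            loIdx n x y i ≤ (t : ℕ) → (t : ℕ) < hiIdx n x y i → a t ≠ 0) then 1 else 0) := by
    intro a
    have hprod : (if (∀ i < n - k, ∃ t : Fin n,
          loIdx n x y i ≤ (t : ℕ) ∧ (t : ℕ) < hiIdx n x y i ∧ a t = 0) then (1 : ℤ) else 0)
        = ∏ i ∈ Finset.range (n - k),
            ((1 : ℤ) - if (∀ t : Fin n,
              loIdx n x y i ≤ (t : ℕ) → (t : ℕ) < hiIdx n x y i → a t ≠ 0) then 1 else 0) := by
      by_cases hP : ∀ i < n - k, ∃ t : Fin n,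
          loIdx n x y i ≤ (t : ℕ) ∧ (t : ℕ) < hiIdx n x y i ∧ a t = 0
      · rw [if_pos hP]
        refine (Finset.prod_eq_one fun i hi => ?_).symm
        obtain ⟨t, h1, h2, h3⟩ := hP i (Finset.mem_range.1 hi)
        rw [if_neg fun h => h t h1 h2 h3, sub_zero]
      · rw [if_neg hP]
        push_neg at hP
        obtain ⟨i, hi, hQ⟩ := hP
        refine (Finset.prod_eq_zero (Finset.mem_range.2 hi) ?_).symm
        rw [if_pos, sub_self]
        intro t h1 h2
        exact hQ t h1 h2
      -- note push_neg shape may need adjusting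
    rw [hprod]
    have : ∀ i : ℕ, ((1 : ℤ) - if (∀ t : Fin n,
        loIdx n x y i ≤ (t : ℕ) → (t : ℕ) < hiIdx n x y i → a t ≠ 0) then 1 else 0)
        = (-if (∀ t : Fin n,
            loIdx n x y i ≤ (t : ℕ) → (t : ℕ) < hiIdx n x y i → a t ≠ 0) then (1:ℤ) else 0) + 1 := by
      intro i; ring
    rw [Finset.prod_congr rfl fun i _ => this i, Finset.prod_add]
    refine Finset.sum_congr rfl fun S hS => ?_
    rw [Finset.prod_const_one, mul_one]
    rw [prod_neg', Finset.prod_boole]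
  rw [Ncount, ← Finset.sum_boole]
  delta loIdx hiIdx at key ⊢
  rw [Finset.sum_congr rfl fun a _ => key a, Finset.sum_comm]
  refine Finset.sum_congr rfl fun S hS => ?_
  rw [← Finset.mul_sum, Finset.sum_boole]

end Main


lemma prod_neg'' {β : Type*} [CommRing β] (S : Finset ℕ) (f : ℕ → β) :
    ∏ i ∈ S, (-f i) = (-1 : β) ^ S.card * ∏ i ∈ S, f i := by
  rw [← Finset.prod_const, ← Finset.prod_mul_distrib]
  simp

lemma AT_succ (k n : ℕ) :
    Finset.Nat.antidiagonalTuple (k+1) n =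
      (Finset.HasAntidiagonal.antidiagonal n).biUnion (fun p =>
        (Finset.Nat.antidiagonalTuple k p.2).map
          ⟨Fin.cons p.1, Fin.cons_right_injective (α := fun _ => ℕ) p.1⟩) := by
  ext a
  simp only [Finset.Nat.mem_antidiagonalTuple, Finset.mem_biUnion, Finset.HasAntidiagonal.mem_antidiagonal,
    Finset.mem_map, Function.Embedding.coeFn_mk, Prod.exists]
  constructor
  · rintro rfl
    exact ⟨a 0, ∑ i : Fin k, Fin.tail a i, (Fin.sum_univ_succ a).symm,
      Fin.tail a, rfl, Fin.cons_self_tail a⟩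
  · rintro ⟨p, q, rfl, b, hb, rfl⟩
    rw [Fin.sum_cons, hb]

lemma card_AT_succ (k n : ℕ) :
    (Finset.Nat.antidiagonalTuple (k+1) n).card =
      ∑ p ∈ Finset.HasAntidiagonal.antidiagonal n, (Finset.Nat.antidiagonalTuple k p.2).card := by
  rw [AT_succ, Finset.card_biUnion]
  · simp
  · rintro ⟨p1, p2⟩ hp ⟨q1, q2⟩ hq hne
    simp only [Finset.mem_coe, Finset.HasAntidiagonal.mem_antidiagonal] at hp hq
    rw [Function.onFun, Finset.disjoint_left]
    rintro a ha ha'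
    simp only [Finset.mem_map, Function.Embedding.coeFn_mk] at ha ha'
    obtain ⟨b, hb, rfl⟩ := ha
    obtain ⟨c, hc, hcb⟩ := ha'
    have h1 : q1 = p1 := by
      have := congrArg (fun f => f 0) hcb
      simpa using this
    exact hne (by subst h1; simp; omega)

lemma cardAT_rec (N m : ℕ) :
    (Finset.Nat.antidiagonalTuple (N+1) (m+1)).card =
      (Finset.Nat.antidiagonalTuple N (m+1)).card +
      (Finset.Nat.antidiagonalTuple (N+1) m).card := by
  rw [card_AT_succ, card_AT_succ N m, Finset.Nat.sum_antidiagonal_eq_sum_range_succ_mk,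
    Finset.Nat.sum_antidiagonal_eq_sum_range_succ_mk, Finset.sum_range_succ']
  simp [Nat.succ_sub_succ, add_comm]

lemma F_succ_mul (N : ℕ) :
    (PowerSeries.mk fun m => ((Finset.Nat.antidiagonalTuple (N+1) m).card : ℤ)) *
      (1 - PowerSeries.X) =
    PowerSeries.mk fun m => ((Finset.Nat.antidiagonalTuple N m).card : ℤ) := by
  ext m
  rw [mul_sub, mul_one, map_sub]
  cases m with
  | zero =>
    simp [PowerSeries.coeff_zero_eq_constantCoeff, map_mul,
      Finset.Nat.antidiagonalTuple_zero_right]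
  | succ m =>
    rw [PowerSeries.coeff_succ_mul_X, PowerSeries.coeff_mk, PowerSeries.coeff_mk,
      PowerSeries.coeff_mk, cardAT_rec]
    push_cast
    ring

lemma F_mul (N : ℕ) :
    (PowerSeries.mk fun m => ((Finset.Nat.antidiagonalTuple N m).card : ℤ)) *
      (1 - PowerSeries.X)^N = 1 := by
  induction N with
  | zero =>
    rw [pow_zero, mul_one]
    ext m
    cases m with
    | zero => simp
    | succ m => simp
  | succ N ih =>
    calc (PowerSeries.mk fun m => ((Finset.Nat.antidiagonalTuple (N+1) m).card : ℤ)) *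
          (1 - PowerSeries.X)^(N+1)
        = ((PowerSeries.mk fun m => ((Finset.Nat.antidiagonalTuple (N+1) m).card : ℤ)) *
          (1 - PowerSeries.X)) * (1 - PowerSeries.X)^N := by ring
      _ = (PowerSeries.mk fun m => ((Finset.Nat.antidiagonalTuple N m).card : ℤ)) *
          (1 - PowerSeries.X)^N := by rw [F_succ_mul]
      _ = 1 := ih


/-- `Σ_{m≥0} N_m t^m = Π_{i=1}^{n−k} (1 + t + ⋯ + t^{l_i−1}) · (1 − t)^{−k}` in `ℤ[[t]]`
(the inverse of the unit `1 − t` is expressed via `Ring.inverse`). -/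
theorem graded_dimension_OSz (n k : ℕ) (hkn : k ≤ n) (x y : Finset ℕ)
    (hx : x ⊆ Finset.range n) (hy : y ⊆ Finset.range n)
    (hxk : x.card = k) (hyk : y.card = k) (hfar : ¬ TooFar k x y) :
    PowerSeries.mk (fun m => (Ncount n k x y m : ℤ))
      = (∏ i ∈ Finset.range (n - k),
          ∑ j ∈ Finset.range
            (min (hnth n x (i + 1)) (hnth n y (i + 1)) - max (hnth n x i) (hnth n y i)),
            (PowerSeries.X : PowerSeries ℤ) ^ j) *
        Ring.inverse (1 - (PowerSeries.X : PowerSeries ℤ)) ^ k := by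
  classical
  have hgoal : (∏ i ∈ Finset.range (n - k),
      ∑ j ∈ Finset.range
        (min (hnth n x (i + 1)) (hnth n y (i + 1)) - max (hnth n x i) (hnth n y i)),
        (PowerSeries.X : PowerSeries ℤ) ^ j)
      = ∏ i ∈ Finset.range (n - k),
          ∑ j ∈ Finset.range (hiIdx n x y i - loIdx n x y i),
            (PowerSeries.X : PowerSeries ℤ) ^ j := by
    simp only [loIdx, hiIdx]
  rw [hgoal]
  set c := n - k with hc
  set F : PowerSeries ℤ := PowerSeries.mk fun m => ((Finset.Nat.antidiagonalTuple n m).card : ℤ)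
    with hF
  set Pser : PowerSeries ℤ := ∑ S ∈ (Finset.range c).powerset,
      PowerSeries.C ((-1 : ℤ) ^ S.card) *
        PowerSeries.X ^ (∑ i ∈ S, (hiIdx n x y i - loIdx n x y i)) with hPser
  -- Step 1
  have step1 : PowerSeries.mk (fun m => (Ncount n k x y m : ℤ)) = Pser * F := by
    ext m
    rw [PowerSeries.coeff_mk, hPser, Finset.sum_mul, map_sum,
      stepA hkn hx hy hxk hyk m]
    refine Finset.sum_congr rfl fun S hS => ?_
    rw [mul_assoc, PowerSeries.coeff_C_mul, PowerSeries.coeff_X_pow_mul',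
      stepB hkn hx hy hxk hyk S (Finset.mem_powerset.1 hS) m]
    rw [hF, PowerSeries.coeff_mk]
    congr 1
    split_ifs <;> simp
  -- Step 2
  have step2 : Pser = ∏ i ∈ Finset.range c,
      ((1 : PowerSeries ℤ) - PowerSeries.X ^ (hiIdx n x y i - loIdx n x y i)) := by
    have : ∀ i : ℕ, ((1 : PowerSeries ℤ) - PowerSeries.X ^ (hiIdx n x y i - loIdx n x y i))
        = (-(PowerSeries.X ^ (hiIdx n x y i - loIdx n x y i))) + 1 := fun i => by ring
    rw [Finset.prod_congr rfl fun i _ => this i, Finset.prod_add, hPser]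
    refine Finset.sum_congr rfl fun S hS => ?_
    rw [Finset.prod_const_one, mul_one, prod_neg'', Finset.prod_pow_eq_pow_sum]
    congr 1
    rw [map_pow, map_neg, map_one]
  -- Step 3
  have step3 : (∏ i ∈ Finset.range c,
        ∑ j ∈ Finset.range (hiIdx n x y i - loIdx n x y i), (PowerSeries.X : PowerSeries ℤ) ^ j) *
      (1 - PowerSeries.X) ^ c
      = ∏ i ∈ Finset.range c,
          ((1 : PowerSeries ℤ) - PowerSeries.X ^ (hiIdx n x y i - loIdx n x y i)) := by
    have hpc : ((1 : PowerSeries ℤ) - PowerSeries.X) ^ c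
        = ∏ _i ∈ Finset.range c, ((1 : PowerSeries ℤ) - PowerSeries.X) := by
      rw [Finset.prod_const, Finset.card_range]
    rw [hpc, ← Finset.prod_mul_distrib]
    refine Finset.prod_congr rfl fun i _ => ?_
    rw [show (1 : PowerSeries ℤ) - PowerSeries.X = -(PowerSeries.X - 1) by ring, mul_neg,
      geom_sum_mul]
    ring
  -- units and cancellation
  have hconst : PowerSeries.constantCoeff (1 - (PowerSeries.X : PowerSeries ℤ)) = 1 := by
    simp
  have hu : IsUnit ((1 : PowerSeries ℤ) - PowerSeries.X) := by
    rw [PowerSeries.isUnit_iff_constantCoeff, hconst]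
    exact isUnit_one
  have hne : ((1 : PowerSeries ℤ) - PowerSeries.X) ^ c ≠ 0 := by
    apply pow_ne_zero
    intro h
    have := congrArg (PowerSeries.constantCoeff) h
    rw [hconst, map_zero] at this
    exact one_ne_zero this
  have hFmul : F * (1 - PowerSeries.X) ^ n = 1 := F_mul n
  have hkey : PowerSeries.mk (fun m => (Ncount n k x y m : ℤ)) * (1 - PowerSeries.X) ^ k
      = ∏ i ∈ Finset.range c,
          ∑ j ∈ Finset.range (hiIdx n x y i - loIdx n x y i),
            (PowerSeries.X : PowerSeries ℤ) ^ j := by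
    apply mul_right_cancel₀ hne
    rw [step3]
    calc PowerSeries.mk (fun m => (Ncount n k x y m : ℤ)) * (1 - PowerSeries.X) ^ k *
          (1 - PowerSeries.X) ^ c
        = (Pser * F) * ((1 - PowerSeries.X) ^ (k + c)) := by rw [step1, pow_add]; ring
      _ = Pser * (F * (1 - PowerSeries.X) ^ n) := by
          rw [hc, Nat.add_sub_cancel' hkn, mul_assoc]
      _ = Pser := by rw [hFmul, mul_one]
      _ = _ := step2
  have h2 : ((1 : PowerSeries ℤ) - PowerSeries.X) ^ k *
      Ring.inverse (1 - (PowerSeries.X : PowerSeries ℤ)) ^ k = 1 := by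
    rw [← mul_pow, Ring.mul_inverse_cancel _ hu, one_pow]
  calc PowerSeries.mk (fun m => (Ncount n k x y m : ℤ))
      = PowerSeries.mk (fun m => (Ncount n k x y m : ℤ)) *
        (((1 : PowerSeries ℤ) - PowerSeries.X) ^ k *
          Ring.inverse (1 - (PowerSeries.X : PowerSeries ℤ)) ^ k) := by rw [h2, mul_one]
    _ = (PowerSeries.mk (fun m => (Ncount n k x y m : ℤ)) * (1 - PowerSeries.X) ^ k) *
        Ring.inverse (1 - (PowerSeries.X : PowerSeries ℤ)) ^ k := by ring
    _ = _ := by rw [hkey]
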